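/- Let 𝒜 and ℬ be quasi-hereditary ℂ-linear categories with standard posets Δ_𝒜, Δ_ℬ, let E: 𝒜 → ℬ be a right exact functor with E(Δ_𝒜) ⊆ Δ_ℬ ∪ {0}, and let ♡: ℬ → ℬ_♡ be an exact functor such that Hom_ℬ(M, N) = 0 for every M ∈ Ker(♡) and every standardly filtered N ∈ ℬ^Δ. If ♡∘E is exact on the exact subcategory 𝒜^Δ of standardly filtered objects, then E restricts to an exact functor 𝒜^Δ → ℬ^Δ. -/
import Mathlib


open CategoryTheory CategoryTheory.Limits

/-- `X` has a filtration of length `n` with subquotients in `Δ`. -/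
def FiltN {C : Type*} [Category C] [Abelian C] (Δ : Set C) : ℕ → C → Prop
  | 0, X => IsZero X
  | n + 1, X => ∃ (Y : C) (f : Y ⟶ X), Mono f ∧ FiltN Δ n Y ∧
      ∃ S ∈ Δ, Nonempty (cokernel f ≅ S)

/-- `X` is Δ-filtered: it has a finite filtration whose successive quotients
lie in `Δ`. -/
def StdFilt {C : Type*} [Category C] [Abelian C] (Δ : Set C) (X : C) : Prop :=
  ∃ n, FiltN Δ n X

lemma filtN_of_iso {C : Type*} [Category C] [Abelian C] {Δ : Set C} {n : ℕ}
    {X X' : C} (h : FiltN Δ n X) (e : X ≅ X') : FiltN Δ n X' := by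
  cases n with
  | zero => exact h.of_iso e.symm
  | succ n =>
    obtain ⟨Y, f, hf, hY, S, hS, ⟨i⟩⟩ := h
    exact ⟨Y, f ≫ e.hom, inferInstance, hY, S, hS,
      ⟨(cokernelCompIsIso f e.hom) ≪≫ i⟩⟩

lemma stdFilt_of_iso {C : Type*} [Category C] [Abelian C] {Δ : Set C}
    {X X' : C} (h : StdFilt Δ X) (e : X ≅ X') : StdFilt Δ X' := by
  obtain ⟨n, hn⟩ := h
  exact ⟨n, filtN_of_iso hn e⟩

open ZeroObject in
lemma stdFilt_of_mem {C : Type*} [Category C] [Abelian C] {Δ : Set C}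
    {S : C} (hS : S ∈ Δ) : StdFilt Δ S := by
  refine ⟨1, 0, (0 : (0 : C) ⟶ S), ?_, isZero_zero C, S, hS,
    ⟨cokernelZeroIsoTarget⟩⟩
  exact ⟨fun g h hg => (isZero_zero C).eq_of_tgt g h⟩

/-- Lemma 7.9: let `E : 𝒜 → ℬ` be a right exact functor of quasi-hereditary
`ℂ`-linear (abelian) categories with `E(Δ_𝒜) ⊆ Δ_ℬ ∪ {0}`, and let
`♡ : ℬ → ℬ_♡` be an exact functor with `Hom_ℬ(M, N) = 0` for all
`M ∈ Ker(♡)` and all standardly filtered `N`.  If `♡ ∘ E` is exact on `𝒜^Δ`,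
then `E` restricts to an exact functor `𝒜^Δ → ℬ^Δ`. -/
theorem stmt_19 {A B BH : Type*}
    [Category A] [Abelian A] [Linear ℂ A]
    [Category B] [Abelian B] [Linear ℂ B]
    [Category BH] [Abelian BH] [Linear ℂ BH]
    (ΔA : Set A) (ΔB : Set B)
    (E : A ⥤ B) [E.Additive] [PreservesFiniteColimits E]
    (hEΔ : ∀ S ∈ ΔA, E.obj S ∈ ΔB ∨ IsZero (E.obj S))
    (H : B ⥤ BH) [H.Additive] [PreservesFiniteLimits H] [PreservesFiniteColimits H]
    (hker : ∀ (M : B) (N : B), IsZero (H.obj M) → StdFilt ΔB N →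
      ∀ f : M ⟶ N, f = 0)
    (hHE : ∀ S : ShortComplex A, S.ShortExact →
      StdFilt ΔA S.X₁ → StdFilt ΔA S.X₂ → StdFilt ΔA S.X₃ →
      (S.map (E ⋙ H)).ShortExact) :
    (∀ X : A, StdFilt ΔA X → StdFilt ΔB (E.obj X)) ∧
    (∀ S : ShortComplex A, S.ShortExact →
      StdFilt ΔA S.X₁ → StdFilt ΔA S.X₂ → StdFilt ΔA S.X₃ →
      (S.map E).ShortExact) := by
  -- Key step: `E.map S.f` is a monomorphism, provided `E.obj S.X₁` is
  -- standardly filtered.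
  have key : ∀ S : ShortComplex A, S.ShortExact →
      StdFilt ΔA S.X₁ → StdFilt ΔA S.X₂ → StdFilt ΔA S.X₃ →
      StdFilt ΔB (E.obj S.X₁) → Mono (E.map S.f) := by
    intro S hS h1 h2 h3 hE1
    have hH := hHE S hS h1 h2 h3
    have hmono : Mono (H.map (E.map S.f)) := hH.mono_f
    have hzero : IsZero (H.obj (kernel (E.map S.f))) :=
      (isZero_zero BH).of_iso
        (PreservesKernel.iso H (E.map S.f) ≪≫ kernel.ofMono (H.map (E.map S.f)))
    have := hker _ _ hzero hE1 (kernel.ι (E.map S.f))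
    exact Abelian.mono_of_kernel_ι_eq_zero _ this
  -- Part 1: `E` preserves standard filtrations.
  have part1 : ∀ X : A, StdFilt ΔA X → StdFilt ΔB (E.obj X) := by
    intro X hX
    obtain ⟨n, hn⟩ := hX
    induction n generalizing X with
    | zero => exact ⟨0, (E.map_isZero hn)⟩
    | succ n ih =>
      obtain ⟨Y, f, hf, hY, T, hT, ⟨e⟩⟩ := hn
      have hEY : StdFilt ΔB (E.obj Y) := ih Y hY
      -- the short exact sequence `0 → Y → X → cokernel f → 0`
      set SC : ShortComplex A := ShortComplex.mk f (cokernel.π f) (cokernel.condition f)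
      have hSC : SC.ShortExact := by
        refine ⟨SC.exact_of_g_is_cokernel (cokernelIsCokernel f)⟩
      have h1 : StdFilt ΔA SC.X₁ := ⟨n, hY⟩
      have h2 : StdFilt ΔA SC.X₂ := ⟨n + 1, ⟨Y, f, hf, hY, T, hT, ⟨e⟩⟩⟩
      have h3 : StdFilt ΔA SC.X₃ := stdFilt_of_iso (stdFilt_of_mem hT) e.symm
      have hmono : Mono (E.map f) := key SC hSC h1 h2 h3 hEY
      -- cokernel of `E.map f` is `E.obj T` (up to iso)
      have ecok : cokernel (E.map f) ≅ E.obj T :=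
        (PreservesCokernel.iso E f).symm ≪≫ E.mapIso e
      rcases hEΔ T hT with hmem | hz
      · obtain ⟨m, hm⟩ := hEY
        exact ⟨m + 1, E.obj Y, E.map f, hmono, hm, E.obj T, hmem, ⟨ecok⟩⟩
      · -- `E.obj T = 0`, so `E.map f` is an isomorphism
        have hcz : IsZero (cokernel (E.map f)) := hz.of_iso ecok
        have hepi : Epi (E.map f) :=
          Abelian.epi_of_cokernel_π_eq_zero _ (hcz.eq_of_tgt _ _)
        have : IsIso (E.map f) := isIso_of_mono_of_epi _
        exact stdFilt_of_iso hEY (asIso (E.map f))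
  refine ⟨part1, ?_⟩
  -- Part 2: `E` is exact on standardly filtered short exact sequences.
  intro S hS h1 h2 h3
  have hmono : Mono ((S.map E).f) := key S hS h1 h2 h3 (part1 _ h1)
  have : Epi S.g := hS.epi_g
  have hepi : Epi ((S.map E).g) := by
    dsimp [ShortComplex.map]
    infer_instance
  have hexact : (S.map E).Exact :=
    ShortComplex.exact_of_g_is_cokernel _
      (CokernelCofork.mapIsColimit _ hS.gIsCokernel E)
  exact { exact := hexact, mono_f := hmono, epi_g := hepi }
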